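/- Let n ≥ 0 and s ≥ 3 be integers. Then the following identity of rational numbers holds: Σ_{j=1}^n H_j/(j+s) = (1/2)·((H_{n+s})² − H_{n+s}^{(2)}) + Σ_{i=0}^{s−2} (H_{s−1} − H_i)/(n+s−i) − (1/2)·((H_s)² − H_s^{(2)}) − H_{s−1}·H_s + Σ_{k=1}^{s−1} H_k/(s−k). -/

import Mathlib

/-- Harmonic number `H_n = ∑_{i=1}^n 1/i` (with `H_0 = 0`). -/
def H (n : ℕ) : ℚ := ∑ i ∈ Finset.range n, 1 / ((i : ℚ) + 1)
/-- Generalized harmonic number `H_n^{(2)} = ∑_{i=1}^n 1/i²`. -/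
def H2 (n : ℕ) : ℚ := ∑ i ∈ Finset.range n, 1 / ((i : ℚ) + 1) ^ 2

lemma H_succ (n : ℕ) : H (n+1) = H n + 1/((n:ℚ)+1) := by
  simp [H, Finset.sum_range_succ]

lemma H2_succ (n : ℕ) : H2 (n+1) = H2 n + 1/((n:ℚ)+1)^2 := by
  simp [H2, Finset.sum_range_succ]

lemma H_zero : H 0 = 0 := by simp [H]

lemma frac_split (a : ℚ) (h1 : a ≠ 0) (h2 : a+1 ≠ 0) :
    1/(a*(a+1)) = 1/a - 1/(a+1) := by field_simp; ring

lemma tele (t n : ℕ) :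
    ∑ i ∈ Finset.range (t+1), (1/(((n:ℚ)+t+3-i)*((n:ℚ)+t+4-i)))
      = 1/((n:ℚ)+3) - 1/((n:ℚ)+t+4) := by
  have h := Finset.sum_range_sub (f := fun j => 1/((n:ℚ)+t+4-j)) (t+1)
  have h2 : ∀ i ∈ Finset.range (t+1),
      (1/(((n:ℚ)+t+3-i)*((n:ℚ)+t+4-i)))
        = 1/((n:ℚ)+t+4-(((i:ℕ)+1:ℕ):ℚ)) - 1/((n:ℚ)+t+4-i) := by
    intro i hi
    have hi' : (i:ℚ) ≤ t := by exact_mod_cast Nat.lt_succ_iff.mp (Finset.mem_range.mp hi)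
    have hn : (0:ℚ) ≤ n := Nat.cast_nonneg n
    have d1 : (n:ℚ)+t+3-i ≠ 0 := by intro h; nlinarith
    have d2 : (n:ℚ)+t+3-i+1 ≠ 0 := by intro h; nlinarith
    have e1 : (n:ℚ)+t+4-i = ((n:ℚ)+t+3-i)+1 := by ring
    have e2 : (n:ℚ)+t+4-(((i:ℕ)+1:ℕ):ℚ) = (n:ℚ)+t+3-i := by push_cast; ring
    rw [e1, e2, frac_split _ d1 d2]
  rw [Finset.sum_congr rfl h2, h]
  push_cast
  ring

lemma keyK (t : ℕ) : ∀ n : ℕ,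
    ∑ i ∈ Finset.range (t+1), (H (t+1) - H i)/(((n:ℚ)+t+2-i)*((n:ℚ)+t+3-i))
      = (H (n+t+2) - H (n+1))/((n:ℚ)+t+3) := by
  induction t with
  | zero =>
    intro n
    have hnn : ((n:ℚ)+2) ≠ 0 := by positivity
    have hnn3 : ((n:ℚ)+3) ≠ 0 := by positivity
    have h1 : H (n+0+2) = H (n+1) + 1/((n:ℚ)+2) := by
      have := H_succ (n+1)
      have e : n+0+2 = (n+1)+1 := by omega
      rw [e, this]; push_cast; ring
    simp only [Finset.sum_range_one, Nat.cast_zero, h1]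
    simp [H_succ, H]
    field_simp
  | succ t ih =>
    intro n
    rw [Finset.sum_range_succ]
    have e0 : ∀ i ∈ Finset.range (t+1),
        (H (t+1+1) - H i)/(((n:ℚ)+((t:ℕ)+1:ℕ)+2-i)*((n:ℚ)+((t:ℕ)+1:ℕ)+3-i))
          = (H (t+1) - H i)/((((n+1:ℕ):ℚ)+t+2-i)*(((n+1:ℕ):ℚ)+t+3-i))
            + (1/((t:ℚ)+2)) * (1/(((n:ℚ)+t+3-i)*((n:ℚ)+t+4-i))) := by
      intro i hi
      rw [H_succ (t+1)]
      push_cast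
      have e1 : (n:ℚ)+((t:ℚ)+1)+2-i = (n:ℚ)+t+3-i := by ring
      have e2 : (n:ℚ)+((t:ℚ)+1)+3-i = (n:ℚ)+t+4-i := by ring
      have e3 : (n:ℚ)+1+t+2-i = (n:ℚ)+t+3-i := by ring
      have e4 : (n:ℚ)+1+t+3-i = (n:ℚ)+t+4-i := by ring
      rw [e1, e2, e3, e4, mul_one_div, ← add_div]
      ring_nf
    rw [Finset.sum_congr rfl e0, Finset.sum_add_distrib, ← Finset.mul_sum, ih (n+1), tele t n]
    have hn2 : H (n+1+1) = H (n+1) + 1/((n:ℚ)+2) := by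
      rw [H_succ (n+1)]; push_cast; ring
    have hts : H (t+1+1) = H (t+1) + 1/((t:ℚ)+2) := by
      rw [H_succ (t+1)]; push_cast; ring
    have hidx : n+1+t+2 = n+(t+1)+2 := by omega
    rw [hn2, hts, hidx]
    push_cast
    set a := H (n+(t+1)+2)
    set b := H (n+1)
    have d1 : ((n:ℚ)+2) ≠ 0 := by positivity
    have d2 : ((n:ℚ)+3) ≠ 0 := by positivity
    have d3 : ((t:ℚ)+2) ≠ 0 := by positivity
    have d4 : ((n:ℚ)+t+4) ≠ 0 := by positivity
    have e5 : (n:ℚ)+1+t+3 = (n:ℚ)+t+4 := by ring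
    have e6 : (n:ℚ)+((t:ℚ)+1)+2-((t:ℚ)+1) = (n:ℚ)+2 := by ring
    have e7 : (n:ℚ)+((t:ℚ)+1)+3-((t:ℚ)+1) = (n:ℚ)+3 := by ring
    have e8 : (n:ℚ)+((t:ℚ)+1)+3 = (n:ℚ)+t+4 := by ring
    rw [e5, e6, e7, e8]
    field_simp
    ring

lemma Hs_sum (t : ℕ) : ∑ i ∈ Finset.range (t+1), 1/((t:ℚ)+2-i) = H (t+2) - 1 := by
  have href := Finset.sum_range_reflect (fun j => 1/((j:ℚ)+2)) (t+1)
  have e : ∀ j ∈ Finset.range (t+1),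
      1/(((t+1-1-j:ℕ):ℚ)+2) = 1/((t:ℚ)+2-j) := by
    intro j hj
    have hj' : j ≤ t := Nat.lt_succ_iff.mp (Finset.mem_range.mp hj)
    have : ((t+1-1-j:ℕ):ℚ) = (t:ℚ)-j := by
      have : t+1-1-j = t-j := by omega
      rw [this, Nat.cast_sub hj']
    rw [this]; ring_nf
  rw [Finset.sum_congr rfl e] at href
  have hc : ∑ i ∈ Finset.range (t+1), 1/(((i+1:ℕ):ℚ)+1) = ∑ i ∈ Finset.range (t+1), 1/((i:ℚ)+2) :=
    Finset.sum_congr rfl (fun i _ => by push_cast; ring_nf)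
  have hsplit : H (t+2) = (∑ i ∈ Finset.range (t+1), 1/((i:ℚ)+2)) + 1 := by
    simp only [H, show t+2 = (t+1)+1 from rfl,
      Finset.sum_range_succ' (fun i => 1/((i:ℚ)+1)) (t+1), hc]
    norm_num
  rw [href, hsplit]
  ring

lemma baseB (t : ℕ) :
    ∑ i ∈ Finset.range (t+1), (H (t+1) - H i)/((t:ℚ)+2-i)
      = H (t+1) * H (t+2) - ∑ i ∈ Finset.range (t+1), H (i+1)/((t:ℚ)+1-i) := by
  have hsplit : ∀ i ∈ Finset.range (t+1),
      (H (t+1) - H i)/((t:ℚ)+2-i) = H (t+1) * (1/((t:ℚ)+2-i)) - H i/((t:ℚ)+2-i) := by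
    intro i hi; ring
  rw [Finset.sum_congr rfl hsplit, Finset.sum_sub_distrib, ← Finset.mul_sum, Hs_sum]
  have h1 : ∑ i ∈ Finset.range (t+1), H i/((t:ℚ)+2-i)
      = ∑ i ∈ Finset.range t, H (i+1)/((t:ℚ)+1-i) := by
    rw [Finset.sum_range_succ' (fun i => H i/((t:ℚ)+2-i)) t]
    simp only [H_zero, Nat.cast_zero, zero_div, add_zero]
    exact Finset.sum_congr rfl (fun i _ => by congr 1; push_cast; ring)
  have h2 : ∑ i ∈ Finset.range (t+1), H (i+1)/((t:ℚ)+1-i)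
      = ∑ i ∈ Finset.range t, H (i+1)/((t:ℚ)+1-i) + H (t+1) := by
    rw [Finset.sum_range_succ]
    norm_num
  rw [h1, h2]
  ring

lemma main' (t : ℕ) (n : ℕ) :
    ∑ j ∈ Finset.Icc 1 n, H j/((j:ℚ)+((t:ℚ)+2))
      = (1/2)*((H (n+t+2))^2 - H2 (n+t+2))
        + ∑ i ∈ Finset.range (t+1), (H (t+1) - H i)/((n:ℚ)+t+2-i)
        - (1/2)*((H (t+2))^2 - H2 (t+2))
        - H (t+1) * H (t+2)
        + ∑ i ∈ Finset.range (t+1), H (i+1)/((t:ℚ)+1-i) := by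
  induction n with
  | zero =>
    simp only [Finset.Icc_self, Nat.cast_zero]
    have e : ∀ i ∈ Finset.range (t+1),
        (H (t+1) - H i)/((0:ℚ)+t+2-i) = (H (t+1) - H i)/((t:ℚ)+2-i) := by
      intro i _; congr 1; ring
    rw [show Finset.Icc 1 0 = ∅ from rfl]
    rw [show (0:ℕ)+t+2 = t+2 from by omega]
    rw [Finset.sum_congr rfl e, baseB]
    simp
  | succ n ih =>
    rw [Finset.sum_Icc_succ_top (by omega : 1 ≤ n+1), ih]
    have d3 : ((n:ℚ)+t+3) ≠ 0 := by positivity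
    have hsub : ∑ i ∈ Finset.range (t+1), (H (t+1) - H i)/((n:ℚ)+t+2-i)
        - ∑ i ∈ Finset.range (t+1), (H (t+1) - H i)/(((n+1:ℕ):ℚ)+t+2-i)
        = ∑ i ∈ Finset.range (t+1), (H (t+1) - H i)/(((n:ℚ)+t+2-i)*((n:ℚ)+t+3-i)) := by
      rw [← Finset.sum_sub_distrib]
      apply Finset.sum_congr rfl
      intro i hi
      have hi' : (i:ℚ) ≤ t := by exact_mod_cast Nat.lt_succ_iff.mp (Finset.mem_range.mp hi)
      have hn : (0:ℚ) ≤ n := Nat.cast_nonneg n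
      have d1 : (n:ℚ)+t+2-i ≠ 0 := by intro h; nlinarith
      have d2 : (n:ℚ)+t+3-i ≠ 0 := by intro h; nlinarith
      have e1 : ((n+1:ℕ):ℚ)+t+2-i = (n:ℚ)+t+3-i := by push_cast; ring
      rw [e1, div_sub_div _ _ d1 d2, div_eq_div_iff (by exact mul_ne_zero d1 d2) (by exact mul_ne_zero d1 d2)]
      ring
    have hmid : ∑ i ∈ Finset.range (t+1), (H (t+1) - H i)/(((n+1:ℕ):ℚ)+t+2-i)
        = ∑ i ∈ Finset.range (t+1), (H (t+1) - H i)/((n:ℚ)+t+2-i)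
          - (H (n+t+2) - H (n+1))/((n:ℚ)+t+3) := by
      have := keyK t n
      linarith [hsub, this]
    have hsq : (1/2)*((H (n+1+t+2))^2 - H2 (n+1+t+2))
        = (1/2)*((H (n+t+2))^2 - H2 (n+t+2)) + H (n+t+2)/((n:ℚ)+t+3) := by
      have e : n+1+t+2 = (n+t+2)+1 := by omega
      have ec : ((n+t+2:ℕ):ℚ)+1 = (n:ℚ)+t+3 := by push_cast; ring
      rw [e, H_succ, H2_succ, ec]
      field_simp
      ring
    rw [hmid, hsq]
    have ec2 : ((n+1:ℕ):ℚ)+((t:ℚ)+2) = (n:ℚ)+t+3 := by push_cast; ring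
    rw [ec2]
    ring

/-- Proposition 1: closed form for `∑_{j=1}^n H_j/(j+s)` for `s ≥ 3`. -/
theorem sum_divided_shifted_harmonic (n s : ℕ) (hs : 3 ≤ s) :
    ∑ j ∈ Finset.Icc 1 n, H j / ((j : ℚ) + s)
      = (1 / 2) * ((H (n + s)) ^ 2 - H2 (n + s))
        + ∑ i ∈ Finset.range (s - 1), (H (s - 1) - H i) / ((n + s - i : ℕ) : ℚ)
        - (1 / 2) * ((H s) ^ 2 - H2 s)
        - H (s - 1) * H s
        + ∑ k ∈ Finset.Icc 1 (s - 1), H k / ((s - k : ℕ) : ℚ) := by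
  obtain ⟨t, rfl⟩ : ∃ t, s = t+2 := ⟨s-2, by omega⟩
  have e1 : t+2-1 = t+1 := by omega
  simp only [e1]
  have eL : ∑ j ∈ Finset.Icc 1 n, H j / ((j : ℚ) + ((t+2:ℕ):ℚ))
      = ∑ j ∈ Finset.Icc 1 n, H j/((j:ℚ)+((t:ℚ)+2)) := by
    apply Finset.sum_congr rfl; intro j _; congr 1; push_cast; ring
  have eM : ∑ i ∈ Finset.range (t+1), (H (t+1) - H i) / ((n + (t+2) - i : ℕ) : ℚ)
      = ∑ i ∈ Finset.range (t+1), (H (t+1) - H i)/((n:ℚ)+t+2-i) := by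
    apply Finset.sum_congr rfl; intro i hi
    have hi' : i ≤ n+(t+2) := by
      have := Finset.mem_range.mp hi; omega
    congr 1
    rw [Nat.cast_sub hi']
    push_cast; ring
  have eR : ∑ k ∈ Finset.Icc 1 (t+1), H k / ((t+2 - k : ℕ) : ℚ)
      = ∑ i ∈ Finset.range (t+1), H (i+1)/((t:ℚ)+1-i) := by
    rw [← Finset.Ico_add_one_right_eq_Icc, Finset.sum_Ico_eq_sum_range]
    apply Finset.sum_congr (by congr 1) ?_
    intro i hi
    have hi' : i ≤ t := by
      have := Finset.mem_range.mp hi; omega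
    have e2 : 1+i = i+1 := by omega
    have e3 : ((t+2-(i+1):ℕ):ℚ) = (t:ℚ)+1-i := by
      rw [show t+2-(i+1) = t+1-i from by omega, Nat.cast_sub (by omega)]
      push_cast; ring
    rw [e2, e3]
  have en : n+(t+2) = n+t+2 := by omega
  rw [eL, eM, eR, en, main' t n]
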